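/- Let d be a positive integer and let p, q ∈ ℝ^d have q(i) ≥ 0 and p(i) > 0 for all i. Then the positive chi-squared divergence is bounded by twice the generalized relative entropy: χ²₊(p,q) ≤ 2·Ent(q,p). -/

import Mathlib

lemma key_deriv (x : ℝ) (hx0 : 0 < x) :
    HasDerivAt (fun x : ℝ => 2 * (x * Real.log x) - x ^ 2 + 1)
      (2 * (Real.log x + 1) - 2 * x) x := by
  have hl : HasDerivAt (fun x : ℝ => x * Real.log x) (Real.log x + 1) x := by
    have : HasDerivAt (fun y : ℝ => y * Real.log y) (1 * Real.log x + x * x⁻¹) x :=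
      (hasDerivAt_id x).mul (Real.hasDerivAt_log hx0.ne')
    have hx : x * x⁻¹ = 1 := mul_inv_cancel₀ hx0.ne'
    simpa [hx, add_comm] using this
  have hsq : HasDerivAt (fun x : ℝ => x ^ 2) (2 * x) x := by
    simpa using (hasDerivAt_pow 2 x)
  simpa using ((hl.const_mul 2).sub hsq).add_const 1

lemma key_ineq (t : ℝ) (ht : 0 < t) (ht1 : t ≤ 1) :
    t ^ 2 - 1 ≤ 2 * (t * Real.log t) := by
  set f : ℝ → ℝ := fun x => 2 * (x * Real.log x) - x ^ 2 + 1 with hf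
  have hderiv : ∀ x ∈ interior (Set.Ioc (0:ℝ) 1), deriv f x ≤ 0 := by
    intro x hx
    rw [interior_Ioc] at hx
    rw [(key_deriv x hx.1).deriv]
    have := Real.log_le_sub_one_of_pos hx.1
    nlinarith
  have hcont : ContinuousOn f (Set.Ioc (0:ℝ) 1) := fun x hx =>
    ((key_deriv x hx.1).continuousAt).continuousWithinAt
  have hanti : AntitoneOn f (Set.Ioc (0:ℝ) 1) :=
    antitoneOn_of_deriv_nonpos (convex_Ioc 0 1) hcont
      (fun x hx => by
        rw [interior_Ioc] at hx
        exact ((key_deriv x hx.1).differentiableAt).differentiableWithinAt)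
      hderiv
  have h := hanti (Set.mem_Ioc.2 ⟨ht, ht1⟩) (Set.mem_Ioc.2 ⟨one_pos, le_refl 1⟩) ht1
  simp only [hf, Real.log_one] at h
  nlinarith [h]

lemma pt_nonneg (a b : ℝ) (hb : 0 < b) (ha : 0 ≤ a) :
    0 ≤ a * Real.log (a / b) - a + b := by
  rcases eq_or_lt_of_le ha with h | h
  · simp [← h]; positivity
  · have h1 : Real.log (b / a) ≤ b / a - 1 := Real.log_le_sub_one_of_pos (by positivity)
    have h2 : Real.log (a / b) = -Real.log (b / a) := by
      rw [← Real.log_inv]; congr 1; field_simp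
    have h3 : a * Real.log (a / b) ≥ a * (1 - b / a) := by
      rw [h2]
      have := mul_le_mul_of_nonneg_left h1 ha
      linarith
    have : a * (1 - b / a) = a - b := by field_simp
    linarith

theorem stmt_0 (d : ℕ) (hd : 0 < d) (p q : Fin d → ℝ)
    (hp : ∀ i, 0 < p i) (hq : ∀ i, 0 ≤ q i) :
    (∑ i, if q i ≤ p i then (p i - q i) ^ 2 / p i else 0) ≤
      2 * ∑ i, (q i * Real.log (q i / p i) - q i + p i) := by
  rw [Finset.mul_sum]
  apply Finset.sum_le_sum
  intro i _
  by_cases h : q i ≤ p i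
  · rw [if_pos h]
    rcases eq_or_lt_of_le (hq i) with h0 | h0
    · rw [← h0]
      have hpi := hp i
      rw [div_le_iff₀ (hp i)]
      have : Real.log (0 / p i) = 0 := by simp
      rw [this]
      nlinarith
    · -- 0 < q i ≤ p i; set t = q i / p i
      have hpi := hp i
      set t : ℝ := q i / p i with ht
      have ht0 : 0 < t := div_pos h0 hpi
      have ht1 : t ≤ 1 := (div_le_one hpi).2 h
      have key := key_ineq t ht0 ht1
      -- key: t^2 - 1 ≤ 2 * (t * log t), multiply by p i
      have hq_eq : q i = t * p i := (div_mul_cancel₀ (q i) hpi.ne').symm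
      rw [div_le_iff₀ hpi]
      have hlog : Real.log (q i / p i) = Real.log t := rfl
      rw [hlog, hq_eq]
      nlinarith [mul_le_mul_of_nonneg_right key (le_of_lt hpi)]
  · rw [if_neg h]
    have := pt_nonneg (q i) (p i) (hp i) (hq i)
    linarith
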